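/- In the WeightedERM high-dimensional setting, fix ℓ ∈ [L] and b̄ > 0, and for i ∈ ℕ define h_i(b) := E[(1 + b·π_i^{(ℓ)}M′′(prox_{bπ_i^{(ℓ)}M(·, ȳ_i)}(Z_i·λ^{(ℓ)} + w_i^{(ℓ)}), ȳ_i))^{−1}], where ȳ_i := q(Z_i, Ψ_i, ε̄) with ε̄ ~ P_ε̄ independent of Z_i ~ N(0, Γ) and w_i^{(ℓ)} ~ N(0, κ_{ℓ,ℓ}). Then the family {h_i}_{i∈ℕ} is equicontinuous with respect to b on [0, b̄]; in fact there is a constant (depending on b̄ but not on i) such that |h_i(b₁) − h_i(b₂)| is bounded by that constant times |b₁ − b₂| for all b₁, b₂ ∈ [0, b̄] and all i. -/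

import Mathlib

open MeasureTheory ProbabilityTheory
open scoped BigOperators NNReal

noncomputable section

/-- Proximal operator: a minimizer of `t ↦ ρ * f t + (t - z)^2 / 2`
(for ρ = 0 the minimizer is z itself). -/
def prox (ρ : ℝ) (f : ℝ → ℝ) (z : ℝ) : ℝ :=
  Classical.epsilon fun t => ∀ s, ρ * f t + (t - z) ^ 2 / 2 ≤ ρ * f s + (s - z) ^ 2 / 2

/-- Matrix-vector multiplication for plain function-typed matrices. -/
def mvec {a b : ℕ} (A : Fin a → Fin b → ℝ) (v : Fin b → ℝ) : Fin a → ℝ :=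
  fun i => ∑ j, A i j * v j

/-- Standard Gaussian measure on ℝ^k. -/
def stdGaussian (k : ℕ) : Measure (Fin k → ℝ) :=
  Measure.pi fun _ => gaussianReal 0 1

/-- Centered Gaussian measure on ℝ^k with covariance matrix K (junk value `0`
if K is not positive semidefinite). -/
def gaussianCov {k : ℕ} (K : Fin k → Fin k → ℝ) : Measure (Fin k → ℝ) :=
  haveI := Classical.propDecidable ((Matrix.of K).PosSemidef)
  if h : (Matrix.of K).PosSemidef then
    (stdGaussian k).map fun g => mvec (fun i j => ((h.1.eigenvectorUnitary : Matrix (Fin k) (Fin k) ℝ) *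
      Matrix.diagonal (fun x => Real.sqrt (h.1.eigenvalues x)) *
      (star h.1.eigenvectorUnitary : Matrix (Fin k) (Fin k) ℝ)) i j) g
  else 0

private def psdSqrt {k : ℕ} {K : Fin k → Fin k → ℝ} (h : (Matrix.of K).PosSemidef) :
    Matrix (Fin k) (Fin k) ℝ :=
  (h.1.eigenvectorUnitary : Matrix (Fin k) (Fin k) ℝ) *
      Matrix.diagonal (fun x => Real.sqrt (h.1.eigenvalues x)) *
      (star h.1.eigenvectorUnitary : Matrix (Fin k) (Fin k) ℝ)

private lemma abs_inv_sub_inv {a b : ℝ} (ha : 1 ≤ a) (hb : 1 ≤ b) :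
    |a⁻¹ - b⁻¹| ≤ |a - b| := by
  have ha0 : (0:ℝ) < a := by linarith
  have hb0 : (0:ℝ) < b := by linarith
  have : a⁻¹ - b⁻¹ = (b - a) * (a⁻¹ * b⁻¹) := by field_simp
  rw [this, abs_mul, abs_sub_comm]
  have h1 : |a⁻¹ * b⁻¹| ≤ 1 := by
    rw [abs_mul, abs_of_pos (inv_pos.2 ha0), abs_of_pos (inv_pos.2 hb0)]
    calc a⁻¹ * b⁻¹ ≤ 1 * 1 := by
          apply mul_le_mul (inv_le_one_of_one_le₀ ha) (inv_le_one_of_one_le₀ hb) (inv_pos.2 hb0).le zero_le_one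
      _ = 1 := by ring
  calc |a - b| * |a⁻¹ * b⁻¹| ≤ |a - b| * 1 := by
        exact mul_le_mul_of_nonneg_left h1 (abs_nonneg _)
    _ = |a - b| := by ring

private lemma lipEst {f f' : ℝ → ℝ} (hf : ∀ x, HasDerivAt f (f' x) x)
    {C : ℝ} (hC : ∀ x, |f' x| ≤ C) (a b : ℝ) : |f a - f b| ≤ C * |a - b| := by
  have := Convex.norm_image_sub_le_of_norm_hasDerivWithin_le
    (f := f) (f' := f') (s := Set.univ) (C := C)
    (fun x _ => (hf x).hasDerivWithinAt) (fun x _ => by simpa using hC x)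
    convex_univ (Set.mem_univ b) (Set.mem_univ a)
  simpa [Real.norm_eq_abs] using this

private lemma continuous_of_lip {α : Type*} [PseudoMetricSpace α] {f : α → ℝ} {C : ℝ}
    (hC : 0 ≤ C) (h : ∀ a b, |f a - f b| ≤ C * dist a b) : Continuous f := by
  refine (LipschitzWith.of_dist_le_mul (K := C.toNNReal) (f := f) ?_).continuous
  intro a b
  rw [Real.coe_toNNReal _ hC, Real.dist_eq]
  exact h a b

section ProxCore

variable {m m1 m2 : ℝ → ℝ}

private lemma prox_spec (hm1 : ∀ x, HasDerivAt m (m1 x) x)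
    (hm2 : ∀ x, HasDerivAt m1 (m2 x) x) (hm2pos : ∀ x, 0 < m2 x)
    {ρ : ℝ} (hρ : 0 ≤ ρ) (x : ℝ) :
    prox ρ m x - x + ρ * m1 (prox ρ m x) = 0 := by
  have hmono : StrictMono m1 := strictMono_of_hasDerivAt_pos hm2 hm2pos
  set φ : ℝ → ℝ := fun t => ρ * m t + (t - x) ^ 2 / 2 with hφ
  set φ' : ℝ → ℝ := fun t => ρ * m1 t + (t - x) with hφ'
  have hφd : ∀ t, HasDerivAt φ (φ' t) t := by
    intro t
    have h1 : HasDerivAt (fun t => ρ * m t) (ρ * m1 t) t := (hm1 t).const_mul ρ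
    have h2 : HasDerivAt (fun t : ℝ => (t - x) ^ 2 / 2) (t - x) t := by
      have := (((hasDerivAt_id t).sub_const x).pow 2).div_const 2
      simpa using this
    exact h1.add h2
  have hφ'cont : Continuous φ' := by
    have hm1cont : Continuous m1 :=
      continuous_iff_continuousAt.2 fun t => (hm2 t).continuousAt
    exact ((continuous_const.mul hm1cont)).add (continuous_id.sub continuous_const)
  have hφ'mono : Monotone φ' := by
    have h1 : Monotone fun t => ρ * m1 t := fun a b hab => by
      have := hmono.monotone hab
      exact mul_le_mul_of_nonneg_left this hρ
    exact h1.add (fun a b hab => by simpa using hab)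
  -- root of φ'
  have hroot : ∃ t₀, φ' t₀ = 0 := by
    have hab : x - ρ * |m1 x| ≤ x + ρ * |m1 x| := by
      have : 0 ≤ ρ * |m1 x| := mul_nonneg hρ (abs_nonneg _)
      linarith
    have hlow : φ' (x - ρ * |m1 x|) ≤ 0 := by
      have h1 : m1 (x - ρ * |m1 x|) ≤ m1 x := by
        apply hmono.monotone
        have : 0 ≤ ρ * |m1 x| := mul_nonneg hρ (abs_nonneg _)
        linarith
      have h2 : ρ * m1 (x - ρ * |m1 x|) ≤ ρ * m1 x := mul_le_mul_of_nonneg_left h1 hρ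
      have h3 : ρ * m1 x ≤ ρ * |m1 x| := mul_le_mul_of_nonneg_left (le_abs_self _) hρ
      simp only [hφ']
      linarith
    have hhigh : 0 ≤ φ' (x + ρ * |m1 x|) := by
      have h1 : m1 x ≤ m1 (x + ρ * |m1 x|) := by
        apply hmono.monotone
        have : 0 ≤ ρ * |m1 x| := mul_nonneg hρ (abs_nonneg _)
        linarith
      have h2 : ρ * m1 x ≤ ρ * m1 (x + ρ * |m1 x|) := mul_le_mul_of_nonneg_left h1 hρ
      have h3 : -(ρ * |m1 x|) ≤ ρ * m1 x := by
        have := mul_le_mul_of_nonneg_left (neg_abs_le (m1 x)) hρ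
        simpa [mul_neg] using this
      simp only [hφ']
      linarith
    have := intermediate_value_Icc hab (hφ'cont.continuousOn)
    have h0mem : (0:ℝ) ∈ Set.Icc (φ' (x - ρ * |m1 x|)) (φ' (x + ρ * |m1 x|)) :=
      ⟨hlow, hhigh⟩
    obtain ⟨t₀, _, ht₀⟩ := this h0mem
    exact ⟨t₀, ht₀⟩
  obtain ⟨t₀, ht₀⟩ := hroot
  -- t₀ is global min of φ
  have hmin : ∀ s, φ t₀ ≤ φ s := by
    intro s
    rcases lt_trichotomy s t₀ with hst | hst | hst
    · obtain ⟨c, hc, hc'⟩ := exists_hasDerivAt_eq_slope φ φ' hst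
        (fun t _ => (hφd t).continuousAt.continuousWithinAt) (fun t _ => hφd t)
      have hφ'c : φ' c ≤ 0 := by
        have := hφ'mono hc.2.le
        rw [ht₀] at this; linarith [this]
      have hslope : (φ t₀ - φ s) / (t₀ - s) ≤ 0 := hc' ▸ hφ'c
      have hpos : 0 < t₀ - s := by linarith
      have := (div_le_iff₀ hpos).1 hslope
      linarith
    · simp [hst]
    · obtain ⟨c, hc, hc'⟩ := exists_hasDerivAt_eq_slope φ φ' hst
        (fun t _ => (hφd t).continuousAt.continuousWithinAt) (fun t _ => hφd t)
      have hφ'c : 0 ≤ φ' c := by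
        have := hφ'mono hc.1.le
        rw [ht₀] at this; linarith [this]
      have hslope : 0 ≤ (φ s - φ t₀) / (s - t₀) := hc' ▸ hφ'c
      have hpos : 0 < s - t₀ := by linarith
      have := (le_div_iff₀ hpos).1 hslope
      linarith
  -- the prox point is a minimizer, hence a critical point
  have hex : ∃ t, ∀ s, ρ * m t + (t - x) ^ 2 / 2 ≤ ρ * m s + (s - x) ^ 2 / 2 := ⟨t₀, hmin⟩
  have hP : ∀ s, ρ * m (prox ρ m x) + (prox ρ m x - x) ^ 2 / 2
      ≤ ρ * m s + (s - x) ^ 2 / 2 := Classical.epsilon_spec hex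
  have hlocmin : IsLocalMin φ (prox ρ m x) := Filter.Eventually.of_forall hP
  have := hlocmin.hasDerivAt_eq_zero (hφd (prox ρ m x))
  simp only [hφ'] at this
  linarith [this]

private lemma prox_m1_bound (hm1 : ∀ x, HasDerivAt m (m1 x) x)
    (hm2 : ∀ x, HasDerivAt m1 (m2 x) x) (hm2pos : ∀ x, 0 < m2 x)
    {ρ : ℝ} (hρ : 0 ≤ ρ) (x : ℝ) :
    |m1 (prox ρ m x)| ≤ |m1 x| := by
  have hmono : StrictMono m1 := strictMono_of_hasDerivAt_pos hm2 hm2pos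
  have heq := prox_spec hm1 hm2 hm2pos hρ x
  set P := prox ρ m x with hPdef
  rw [abs_le]
  constructor
  · by_contra hcon
    push_neg at hcon
    have h1 : m1 P < m1 x := lt_of_lt_of_le hcon (neg_abs_le _)
    have h2 : P < x := hmono.lt_iff_lt.1 h1
    have h3 : 0 < ρ * m1 P := by linarith
    have h4 : m1 P < 0 := lt_of_lt_of_le hcon (by simp [abs_nonneg])
    nlinarith
  · by_contra hcon
    push_neg at hcon
    have h1 : m1 x < m1 P := lt_of_le_of_lt (le_abs_self _) hcon
    have h2 : x < P := hmono.lt_iff_lt.1 h1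
    have h3 : ρ * m1 P < 0 := by linarith
    have h4 : 0 < m1 P := lt_of_le_of_lt (abs_nonneg _) hcon
    nlinarith

end ProxCore

section ProxDiff

variable {M M1 M2 M3 M12 : ℝ → ℝ → ℝ}

private lemma prox_diff
    (hM1 : ∀ u v, HasDerivAt (fun t => M t v) (M1 u v) u)
    (hM2 : ∀ u v, HasDerivAt (fun t => M1 t v) (M2 u v) u)
    (hM12 : ∀ u v, HasDerivAt (fun w => M1 u w) (M12 u v) v)
    (hM2pos : ∀ u v, 0 < M2 u v)
    {B12 : ℝ} (hM12bdd : ∀ u v, |M12 u v| ≤ B12)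
    {ρ₁ ρ₂ : ℝ} (hρ₁ : 0 ≤ ρ₁) (hρ₂ : 0 ≤ ρ₂) (x x' y y' : ℝ) :
    |prox ρ₁ (fun t => M t y) x - prox ρ₂ (fun t => M t y') x'| ≤
      |x - x'| + ρ₁ * B12 * |y - y'| + |ρ₁ - ρ₂| * |M1 x' y'| := by
  set P₁ := prox ρ₁ (fun t => M t y) x with hP₁
  set P₂ := prox ρ₂ (fun t => M t y') x' with hP₂
  have e₁ : P₁ - x + ρ₁ * M1 P₁ y = 0 :=
    prox_spec (fun u => hM1 u y) (fun u => hM2 u y) (fun u => hM2pos u y) hρ₁ x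
  have e₂ : P₂ - x' + ρ₂ * M1 P₂ y' = 0 :=
    prox_spec (fun u => hM1 u y') (fun u => hM2 u y') (fun u => hM2pos u y') hρ₂ x'
  have hmono : StrictMono fun t => M1 t y :=
    strictMono_of_hasDerivAt_pos (fun u => hM2 u y) (fun u => hM2pos u y)
  set d := P₁ - P₂ with hd
  -- sign term
  have hsign : 0 ≤ d * (M1 P₁ y - M1 P₂ y) := by
    rcases le_total P₁ P₂ with hle | hle
    · have := hmono.monotone hle
      have hd0 : d ≤ 0 := by simp only [hd]; linarith
      have := mul_nonneg (neg_nonneg.2 hd0) (neg_nonneg.2 (by linarith : M1 P₁ y - M1 P₂ y ≤ 0))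
      nlinarith
    · have := hmono.monotone hle
      have hd0 : 0 ≤ d := by simp only [hd]; linarith
      exact mul_nonneg hd0 (by linarith)
  -- Lipschitz in second variable
  have hlipv : |M1 P₂ y - M1 P₂ y'| ≤ B12 * |y - y'| :=
    lipEst (hM12 P₂) (fun v => hM12bdd P₂ v) y y'
  have hm1b : |M1 P₂ y'| ≤ |M1 x' y'| :=
    prox_m1_bound (fun u => hM1 u y') (fun u => hM2 u y') (fun u => hM2pos u y') hρ₂ x'
  -- key identity
  have hkey : d = (x - x') - ρ₁ * (M1 P₁ y - M1 P₂ y)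
      - ρ₁ * (M1 P₂ y - M1 P₂ y') - (ρ₁ - ρ₂) * M1 P₂ y' := by
    simp only [hd]; linarith [e₁, e₂]
  have hB12nn : 0 ≤ B12 := le_trans (abs_nonneg _) (hM12bdd 0 0)
  have hsq : d * d ≤ |d| * (|x - x'| + ρ₁ * B12 * |y - y'| + |ρ₁ - ρ₂| * |M1 x' y'|) := by
    have h1 : d * d = d * ((x - x') - ρ₁ * (M1 P₁ y - M1 P₂ y)
        - ρ₁ * (M1 P₂ y - M1 P₂ y') - (ρ₁ - ρ₂) * M1 P₂ y') := by
      rw [← hkey]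
    have h2 : d * (x - x') ≤ |d| * |x - x'| := by
      rw [← abs_mul]; exact le_abs_self _
    have h3 : -(ρ₁ * (d * (M1 P₂ y - M1 P₂ y'))) ≤ ρ₁ * (|d| * (B12 * |y - y'|)) := by
      have : -(d * (M1 P₂ y - M1 P₂ y')) ≤ |d| * |M1 P₂ y - M1 P₂ y'| := by
        rw [← abs_mul]; exact neg_le_abs _
      have h4 : |d| * |M1 P₂ y - M1 P₂ y'| ≤ |d| * (B12 * |y - y'|) :=
        mul_le_mul_of_nonneg_left hlipv (abs_nonneg _)
      have h5 := mul_le_mul_of_nonneg_left (le_trans this h4) hρ₁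
      linarith [h5]
    have h6 : -(d * ((ρ₁ - ρ₂) * M1 P₂ y')) ≤ |d| * (|ρ₁ - ρ₂| * |M1 x' y'|) := by
      have ha : -(d * ((ρ₁ - ρ₂) * M1 P₂ y')) ≤ |d * ((ρ₁ - ρ₂) * M1 P₂ y')| := neg_le_abs _
      have hb : |d * ((ρ₁ - ρ₂) * M1 P₂ y')| = |d| * (|ρ₁ - ρ₂| * |M1 P₂ y'|) := by
        rw [abs_mul, abs_mul]
      have hc : |d| * (|ρ₁ - ρ₂| * |M1 P₂ y'|) ≤ |d| * (|ρ₁ - ρ₂| * |M1 x' y'|) := by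
        apply mul_le_mul_of_nonneg_left _ (abs_nonneg _)
        exact mul_le_mul_of_nonneg_left hm1b (abs_nonneg _)
      linarith [ha, hb ▸ hc]
    have h7 : -(ρ₁ * (d * (M1 P₁ y - M1 P₂ y))) ≤ 0 := by
      have := mul_nonneg hρ₁ hsign
      linarith
    nlinarith [h1, h2, h3, h6, h7]
  have habs : |d| * |d| ≤ |d| * (|x - x'| + ρ₁ * B12 * |y - y'| + |ρ₁ - ρ₂| * |M1 x' y'|) := by
    rw [← abs_mul, abs_mul_self]; exact hsq
  rcases eq_or_lt_of_le (abs_nonneg d) with h0 | h0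
  · rw [← h0]
    have : 0 ≤ |x - x'| + ρ₁ * B12 * |y - y'| + |ρ₁ - ρ₂| * |M1 x' y'| := by
      have := mul_nonneg (mul_nonneg hρ₁ hB12nn) (abs_nonneg (y - y'))
      have := mul_nonneg (abs_nonneg (ρ₁ - ρ₂)) (abs_nonneg (M1 x' y'))
      positivity
    exact this
  · exact le_of_mul_le_mul_left habs h0

end ProxDiff

section GEst

/-- The integrand as a function of effective parameter ρ, shift x and response y. -/
private def Gf (M M2 : ℝ → ℝ → ℝ) (ρ x y : ℝ) : ℝ :=
  (1 + ρ * M2 (prox ρ (fun t => M t y) x) y)⁻¹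

variable {M M1 M2 M3 M12 M2v : ℝ → ℝ → ℝ}

private lemma G_denom_ge (hM2pos : ∀ u v, 0 < M2 u v) {ρ : ℝ} (hρ : 0 ≤ ρ) (u y : ℝ) :
    1 ≤ 1 + ρ * M2 u y := by
  nlinarith [mul_nonneg hρ (hM2pos u y).le]

private lemma G_le_one (hM2pos : ∀ u v, 0 < M2 u v) {ρ : ℝ} (hρ : 0 ≤ ρ) (x y : ℝ) :
    |Gf M M2 ρ x y| ≤ 1 := by
  have h := G_denom_ge (M2 := M2) hM2pos hρ (prox ρ (fun t => M t y) x) y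
  rw [Gf, abs_of_pos (inv_pos.2 (by linarith))]
  exact inv_le_one_of_one_le₀ h

private lemma M1_growth
    (hM2 : ∀ u v, HasDerivAt (fun t => M1 t v) (M2 u v) u)
    (hM12 : ∀ u v, HasDerivAt (fun w => M1 u w) (M12 u v) v)
    {B2 B12 : ℝ} (hM2bdd : ∀ u v, M2 u v ≤ B2) (hM2pos : ∀ u v, 0 < M2 u v)
    (hM12bdd : ∀ u v, |M12 u v| ≤ B12) (x y : ℝ) :
    |M1 x y| ≤ |M1 0 0| + B2 * |x| + B12 * |y| := by
  have h1 : |M1 x y - M1 0 y| ≤ B2 * |x - 0| :=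
    lipEst (fun u => hM2 u y) (fun u => by
      rw [abs_of_pos (hM2pos u y)]; exact hM2bdd u y) x 0
  have h2 : |M1 0 y - M1 0 0| ≤ B12 * |y - 0| :=
    lipEst (fun v => hM12 0 v) (fun v => hM12bdd 0 v) y 0
  simp only [sub_zero] at h1 h2
  calc |M1 x y| = |(M1 x y - M1 0 y) + (M1 0 y - M1 0 0) + M1 0 0| := by ring_nf
    _ ≤ |M1 x y - M1 0 y| + |M1 0 y - M1 0 0| + |M1 0 0| := by
        exact (abs_add_le _ _).trans (by gcongr; exact abs_add_le _ _)
    _ ≤ B2 * |x| + B12 * |y| + |M1 0 0| := by gcongr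
    _ = |M1 0 0| + B2 * |x| + B12 * |y| := by ring

private lemma G_diff_rho
    (hM1 : ∀ u v, HasDerivAt (fun t => M t v) (M1 u v) u)
    (hM2 : ∀ u v, HasDerivAt (fun t => M1 t v) (M2 u v) u)
    (hM3 : ∀ u v, HasDerivAt (fun t => M2 t v) (M3 u v) u)
    (hM12 : ∀ u v, HasDerivAt (fun w => M1 u w) (M12 u v) v)
    (hM2pos : ∀ u v, 0 < M2 u v)
    {B2 B3 B12 : ℝ} (hM2bdd : ∀ u v, M2 u v ≤ B2) (hM3bdd : ∀ u v, |M3 u v| ≤ B3)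
    (hM12bdd : ∀ u v, |M12 u v| ≤ B12)
    {R ρ₁ ρ₂ : ℝ} (hρ₁ : 0 ≤ ρ₁) (hρ₂ : 0 ≤ ρ₂) (hρ₂R : ρ₂ ≤ R) (x y : ℝ) :
    |Gf M M2 ρ₁ x y - Gf M M2 ρ₂ x y| ≤ (B2 + R * B3 * |M1 x y|) * |ρ₁ - ρ₂| := by
  set P₁ := prox ρ₁ (fun t => M t y) x with hP₁
  set P₂ := prox ρ₂ (fun t => M t y) x with hP₂
  have hD₁ : 1 ≤ 1 + ρ₁ * M2 P₁ y := G_denom_ge hM2pos hρ₁ _ _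
  have hD₂ : 1 ≤ 1 + ρ₂ * M2 P₂ y := G_denom_ge hM2pos hρ₂ _ _
  have h0 : |Gf M M2 ρ₁ x y - Gf M M2 ρ₂ x y| ≤
      |(1 + ρ₁ * M2 P₁ y) - (1 + ρ₂ * M2 P₂ y)| := abs_inv_sub_inv hD₁ hD₂
  have hPd : |P₁ - P₂| ≤ |ρ₁ - ρ₂| * |M1 x y| := by
    have := prox_diff hM1 hM2 hM12 hM2pos hM12bdd hρ₁ hρ₂ x x y y
    simpa using this
  have hlip2 : |M2 P₁ y - M2 P₂ y| ≤ B3 * |P₁ - P₂| :=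
    lipEst (fun u => hM3 u y) (fun u => hM3bdd u y) P₁ P₂
  have hB3 : 0 ≤ B3 := le_trans (abs_nonneg _) (hM3bdd 0 0)
  have hR : 0 ≤ R := le_trans hρ₂ hρ₂R
  have hM2abs : |M2 P₁ y| ≤ B2 := by
    rw [abs_of_pos (hM2pos P₁ y)]; exact hM2bdd P₁ y
  have key : |(1 + ρ₁ * M2 P₁ y) - (1 + ρ₂ * M2 P₂ y)| ≤
      (B2 + R * B3 * |M1 x y|) * |ρ₁ - ρ₂| := by
    have hid : (1 + ρ₁ * M2 P₁ y) - (1 + ρ₂ * M2 P₂ y)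
        = (ρ₁ - ρ₂) * M2 P₁ y + ρ₂ * (M2 P₁ y - M2 P₂ y) := by ring
    rw [hid]
    calc |(ρ₁ - ρ₂) * M2 P₁ y + ρ₂ * (M2 P₁ y - M2 P₂ y)|
        ≤ |(ρ₁ - ρ₂) * M2 P₁ y| + |ρ₂ * (M2 P₁ y - M2 P₂ y)| := abs_add_le _ _
      _ = |ρ₁ - ρ₂| * |M2 P₁ y| + ρ₂ * |M2 P₁ y - M2 P₂ y| := by
          rw [abs_mul, abs_mul, abs_of_nonneg hρ₂]
      _ ≤ |ρ₁ - ρ₂| * B2 + R * (B3 * (|ρ₁ - ρ₂| * |M1 x y|)) := by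
          refine add_le_add (mul_le_mul_of_nonneg_left hM2abs (abs_nonneg _)) ?_
          calc ρ₂ * |M2 P₁ y - M2 P₂ y| ≤ R * (B3 * |P₁ - P₂|) :=
                mul_le_mul hρ₂R hlip2 (abs_nonneg _) hR
            _ ≤ R * (B3 * (|ρ₁ - ρ₂| * |M1 x y|)) :=
                mul_le_mul_of_nonneg_left (mul_le_mul_of_nonneg_left hPd hB3) hR
      _ = (B2 + R * B3 * |M1 x y|) * |ρ₁ - ρ₂| := by ring
  exact h0.trans key

private lemma G_diff_xy
    (hM1 : ∀ u v, HasDerivAt (fun t => M t v) (M1 u v) u)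
    (hM2 : ∀ u v, HasDerivAt (fun t => M1 t v) (M2 u v) u)
    (hM3 : ∀ u v, HasDerivAt (fun t => M2 t v) (M3 u v) u)
    (hM12 : ∀ u v, HasDerivAt (fun w => M1 u w) (M12 u v) v)
    (hM2v : ∀ u v, HasDerivAt (fun w => M2 u w) (M2v u v) v)
    (hM2pos : ∀ u v, 0 < M2 u v)
    {B3 B12 B2v : ℝ} (hM3bdd : ∀ u v, |M3 u v| ≤ B3)
    (hM12bdd : ∀ u v, |M12 u v| ≤ B12) (hM2vbdd : ∀ u v, |M2v u v| ≤ B2v)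
    {R ρ : ℝ} (hρ : 0 ≤ ρ) (hρR : ρ ≤ R) (x x' y y' : ℝ) :
    |Gf M M2 ρ x y - Gf M M2 ρ x' y'| ≤
      R * B3 * |x - x'| + (R * B3 * (R * B12) + R * B2v) * |y - y'| := by
  set P₁ := prox ρ (fun t => M t y) x with hP₁
  set P₂ := prox ρ (fun t => M t y') x' with hP₂
  have hD₁ : 1 ≤ 1 + ρ * M2 P₁ y := G_denom_ge hM2pos hρ _ _
  have hD₂ : 1 ≤ 1 + ρ * M2 P₂ y' := G_denom_ge hM2pos hρ _ _
  have h0 : |Gf M M2 ρ x y - Gf M M2 ρ x' y'| ≤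
      |(1 + ρ * M2 P₁ y) - (1 + ρ * M2 P₂ y')| := abs_inv_sub_inv hD₁ hD₂
  have hPd : |P₁ - P₂| ≤ |x - x'| + ρ * B12 * |y - y'| := by
    have := prox_diff hM1 hM2 hM12 hM2pos hM12bdd hρ hρ x x' y y'
    simpa using this
  have hlipu : |M2 P₁ y - M2 P₂ y| ≤ B3 * |P₁ - P₂| :=
    lipEst (fun u => hM3 u y) (fun u => hM3bdd u y) P₁ P₂
  have hlipv : |M2 P₂ y - M2 P₂ y'| ≤ B2v * |y - y'| :=
    lipEst (fun v => hM2v P₂ v) (fun v => hM2vbdd P₂ v) y y'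
  have hB3 : 0 ≤ B3 := le_trans (abs_nonneg _) (hM3bdd 0 0)
  have hB12 : 0 ≤ B12 := le_trans (abs_nonneg _) (hM12bdd 0 0)
  have hR : 0 ≤ R := le_trans hρ hρR
  have key : |(1 + ρ * M2 P₁ y) - (1 + ρ * M2 P₂ y')| ≤
      R * B3 * |x - x'| + (R * B3 * (R * B12) + R * B2v) * |y - y'| := by
    have hid : (1 + ρ * M2 P₁ y) - (1 + ρ * M2 P₂ y')
        = ρ * (M2 P₁ y - M2 P₂ y) + ρ * (M2 P₂ y - M2 P₂ y') := by ring
    rw [hid]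
    calc |ρ * (M2 P₁ y - M2 P₂ y) + ρ * (M2 P₂ y - M2 P₂ y')|
        ≤ ρ * |M2 P₁ y - M2 P₂ y| + ρ * |M2 P₂ y - M2 P₂ y'| := by
          refine (abs_add_le _ _).trans ?_
          rw [abs_mul, abs_mul, abs_of_nonneg hρ]
      _ ≤ R * (B3 * (|x - x'| + ρ * B12 * |y - y'|)) + R * (B2v * |y - y'|) := by
          refine add_le_add ?_ (mul_le_mul hρR hlipv (abs_nonneg _) hR)
          exact mul_le_mul hρR
            (hlipu.trans (mul_le_mul_of_nonneg_left hPd hB3)) (abs_nonneg _) hR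
      _ = R * B3 * |x - x'| + (R * B3 * (ρ * B12) + R * B2v) * |y - y'| := by ring
      _ ≤ R * B3 * |x - x'| + (R * B3 * (R * B12) + R * B2v) * |y - y'| := by gcongr
  exact h0.trans key

end GEst

section MeasureHelpers

private lemma int_bound_one {α : Type*} [MeasurableSpace α] {μ : Measure α}
    [IsProbabilityMeasure μ] {f : α → ℝ} (hfb : ∀ ω, |f ω| ≤ 1) :
    |∫ ω, f ω ∂μ| ≤ 1 := by
  have := norm_integral_le_of_norm_le_const (μ := μ) (f := f) (C := 1)
    (Filter.Eventually.of_forall fun ω => by simpa using hfb ω)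
  simpa [Real.norm_eq_abs] using this

private lemma int_diff_le {α : Type*} [MeasurableSpace α] {μ : Measure α}
    [IsProbabilityMeasure μ] {f g k : α → ℝ}
    (hf : AEStronglyMeasurable f μ) (hg : AEStronglyMeasurable g μ)
    (hfb : ∀ ω, |f ω| ≤ 1) (hgb : ∀ ω, |g ω| ≤ 1)
    (hk : Integrable k μ) (hfg : ∀ ω, |f ω - g ω| ≤ k ω) :
    |∫ ω, f ω ∂μ - ∫ ω, g ω ∂μ| ≤ ∫ ω, k ω ∂μ := by
  have hfint : Integrable f μ :=
    (integrable_const (1:ℝ)).mono' hf (Filter.Eventually.of_forall fun ω => by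
      simpa [Real.norm_eq_abs] using hfb ω)
  have hgint : Integrable g μ :=
    (integrable_const (1:ℝ)).mono' hg (Filter.Eventually.of_forall fun ω => by
      simpa [Real.norm_eq_abs] using hgb ω)
  rw [← integral_sub hfint hgint]
  have h1 : ‖∫ ω, (f ω - g ω) ∂μ‖ ≤ ∫ ω, ‖f ω - g ω‖ ∂μ := norm_integral_le_integral_norm _
  rw [Real.norm_eq_abs] at h1
  refine h1.trans (integral_mono (hfint.sub hgint).norm hk ?_)
  intro ω
  simpa [Real.norm_eq_abs] using hfg ω

private lemma int_diff_le_const {α : Type*} [MeasurableSpace α] {μ : Measure α}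
    [IsProbabilityMeasure μ] {f g : α → ℝ} {c : ℝ}
    (hf : AEStronglyMeasurable f μ) (hg : AEStronglyMeasurable g μ)
    (hfb : ∀ ω, |f ω| ≤ 1) (hgb : ∀ ω, |g ω| ≤ 1)
    (hfg : ∀ ω, |f ω - g ω| ≤ c) :
    |∫ ω, f ω ∂μ - ∫ ω, g ω ∂μ| ≤ c := by
  have := int_diff_le hf hg hfb hgb (integrable_const c) hfg
  simpa using this

private lemma integrable_id_gaussianReal (v : ℝ≥0) :
    Integrable (fun x : ℝ => x) (gaussianReal 0 v) := by
  by_cases hv : v = 0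
  · rw [hv, gaussianReal_zero_var]
    refine ⟨measurable_id.stronglyMeasurable.aestronglyMeasurable, ?_⟩
    rw [HasFiniteIntegral, lintegral_dirac' _ (by fun_prop)]
    simp
  · rw [gaussianReal_of_var_ne_zero _ hv]
    rw [integrable_withDensity_iff (measurable_gaussianPDF _ _)
      (Filter.Eventually.of_forall fun x => ENNReal.ofReal_lt_top)]
    have hb : (0:ℝ) < (2 * (v:ℝ))⁻¹ := by
      have : (0:ℝ) < (v:ℝ) := lt_of_le_of_ne (v.coe_nonneg) (by exact_mod_cast (Ne.symm hv))
      positivity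
    have hint : Integrable (fun x : ℝ => x * Real.exp (-(2 * (v:ℝ))⁻¹ * x ^ 2)) := by
      have := integrable_rpow_mul_exp_neg_mul_sq hb (s := 1) (by norm_num)
      simpa using this
    have heq : (fun x : ℝ => x * (gaussianPDF 0 v x).toReal)
        = fun x : ℝ => (Real.sqrt (2 * Real.pi * v))⁻¹ *
            (x * Real.exp (-(2 * (v:ℝ))⁻¹ * x ^ 2)) := by
      funext x
      rw [gaussianPDF, ENNReal.toReal_ofReal (gaussianPDFReal_nonneg _ _ _), gaussianPDFReal]
      have : -(x - 0) ^ 2 / (2 * (v:ℝ)) = -(2 * (v:ℝ))⁻¹ * x ^ 2 := by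
        field_simp
        ring
      rw [this]; ring
    rw [heq]
    exact hint.const_mul _

private lemma integrable_abs_gaussianReal (v : ℝ≥0) :
    Integrable (fun x : ℝ => |x|) (gaussianReal 0 v) := by
  simpa [Real.norm_eq_abs] using (integrable_id_gaussianReal v).norm

end MeasureHelpers

section GaussHelpers

private instance stdGaussian_prob (k : ℕ) : IsProbabilityMeasure (stdGaussian k) := by
  unfold _root_.stdGaussian; infer_instance

private lemma map_eval_stdGaussian (k : ℕ) (j : Fin k) :
    (stdGaussian k).map (fun g => g j) = gaussianReal 0 1 := by
  ext s hs
  rw [Measure.map_apply (measurable_pi_apply j) hs]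
  have hpre : (fun g : Fin k → ℝ => g j) ⁻¹' s
      = Set.pi Set.univ (Function.update (fun _ : Fin k => (Set.univ : Set ℝ)) j s) := by
    ext g
    simp only [Set.mem_preimage, Set.mem_pi, Set.mem_univ, forall_true_left,
      Function.update_apply]
    constructor
    · intro hg i
      by_cases hij : i = j
      · subst hij; simp [hg]
      · simp [hij]
    · intro hg
      have := hg j
      simpa using this
  rw [hpre, _root_.stdGaussian, Measure.pi_pi]
  rw [Finset.prod_eq_single j]
  · simp
  · intro i _ hij
    simp [Function.update_apply, hij]
  · intro h; exact absurd (Finset.mem_univ j) h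

private lemma integrable_eval_stdGaussian (k : ℕ) (j : Fin k) :
    Integrable (fun g : Fin k → ℝ => g j) (stdGaussian k) := by
  have h := integrable_id_gaussianReal 1
  rw [← map_eval_stdGaussian k j] at h
  have := (integrable_map_measure (f := fun g : Fin k → ℝ => g j)
    (g := fun x : ℝ => x)
    (by exact aestronglyMeasurable_id) (measurable_pi_apply j).aemeasurable).1 h
  exact this

private lemma continuous_mvec {a b : ℕ} (A : Fin a → Fin b → ℝ) :
    Continuous fun v : Fin b → ℝ => mvec A v :=
  continuous_pi fun i => continuous_finset_sum _ fun j _ =>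
    continuous_const.mul (continuous_apply j)

private lemma continuous_lin {k : ℕ} (c : Fin k → ℝ) :
    Continuous fun z : Fin k → ℝ => ∑ j, c j * z j :=
  continuous_finset_sum _ fun j _ => continuous_const.mul (continuous_apply j)

private lemma gaussianCov_eq {k : ℕ} {K : Fin k → Fin k → ℝ}
    (hΓ : (Matrix.of K).PosSemidef) :
    gaussianCov K = (stdGaussian k).map fun g => mvec (fun i j => psdSqrt hΓ i j) g := by
  simp only [gaussianCov, dif_pos hΓ]
  rfl

private instance gaussianCov_prob {k : ℕ} {K : Fin k → Fin k → ℝ}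
    [Fact ((Matrix.of K).PosSemidef)] : IsProbabilityMeasure (gaussianCov K) := by
  rw [gaussianCov_eq (Fact.out : (Matrix.of K).PosSemidef)]
  exact Measure.isProbabilityMeasure_map (continuous_mvec _).measurable.aemeasurable

private lemma integrable_lin_gaussianCov {k : ℕ} {K : Fin k → Fin k → ℝ}
    (hΓ : (Matrix.of K).PosSemidef) (c : Fin k → ℝ) :
    Integrable (fun z : Fin k → ℝ => ∑ j, c j * z j) (gaussianCov K) := by
  rw [gaussianCov_eq hΓ]
  have hmeas : Measurable fun g : Fin k → ℝ => mvec (fun i j => psdSqrt hΓ i j) g :=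
    (continuous_mvec _).measurable
  rw [integrable_map_measure (continuous_lin c).aestronglyMeasurable hmeas.aemeasurable]
  have heq : ((fun z : Fin k → ℝ => ∑ j, c j * z j) ∘
        fun g : Fin k → ℝ => mvec (fun i j => psdSqrt hΓ i j) g)
      = fun g : Fin k → ℝ => ∑ i, (∑ j, c j * psdSqrt hΓ j i) * g i := by
    funext g
    simp only [Function.comp_apply, mvec, Finset.mul_sum]
    rw [Finset.sum_comm]
    refine Finset.sum_congr rfl fun i _ => ?_
    rw [Finset.sum_mul]
    exact Finset.sum_congr rfl fun j _ => by ring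
  rw [heq]
  exact integrable_finset_sum _ fun i _ => (integrable_eval_stdGaussian k i).const_mul _

private lemma integrable_abs_lin_gaussianCov {k : ℕ} {K : Fin k → Fin k → ℝ}
    (hΓ : (Matrix.of K).PosSemidef) (c : Fin k → ℝ) :
    Integrable (fun z : Fin k → ℝ => |∑ j, c j * z j|) (gaussianCov K) := by
  simpa [Real.norm_eq_abs] using (integrable_lin_gaussianCov hΓ c).norm

private lemma integrable_abs_eval_gaussianCov {k : ℕ} {K : Fin k → Fin k → ℝ}
    (hΓ : (Matrix.of K).PosSemidef) (j : Fin k) :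
    Integrable (fun z : Fin k → ℝ => |z j|) (gaussianCov K) := by
  have := integrable_abs_lin_gaussianCov hΓ (Pi.single j 1)
  have heq : (fun z : Fin k → ℝ => |∑ i, (Pi.single j 1 : Fin k → ℝ) i * z i|)
      = fun z : Fin k → ℝ => |z j| := by
    funext z
    congr 1
    simp [Pi.single_apply, ite_mul]
  rwa [heq] at this

end GaussHelpers

set_option maxHeartbeats 1600000 in
/-- Lemma: equicontinuity of the family h_i in b. Fix
ℓ ∈ [L] and b̄ > 0, and set
  h_i(b) := E[(1 + b·π_i M′′(prox_{bπ_iM(·,ȳ_i)}(Z_i·λ^{(ℓ)} + w_i^{(ℓ)}),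
                ȳ_i))⁻¹],
with ȳ_i := q(Z_i, Ψ_i, ε̄), ε̄ ~ P_ε̄ independent of Z_i ~ N(0,Γ) and
w_i ~ N(0,κ_{ℓ,ℓ}). Then {h_i}_{i∈ℕ} is equicontinuous on [0, b̄]; in fact it
is uniformly Lipschitz there, with a constant independent of i. -/
theorem h_family_equicontinuous (L : ℕ)
    (Γ : Fin L → Fin L → ℝ) (hΓ : (Matrix.of Γ).PosSemidef)
    (lam : Fin L → ℝ)            -- λ^{(ℓ)} (ℓ fixed)
    (κ : ℝ≥0)                    -- κ_{ℓ,ℓ}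
    (Ψ : ℕ → Fin L)              -- the signal configuration
    (bbar : ℝ) (hbbar : 0 < bbar)
    -- the weights π_i = π_i^{(ℓ)}: positive and uniformly bounded
    (π : ℕ → ℝ) (hπpos : ∀ i, 0 < π i)
    (πbar : ℝ) (hπbdd : ∀ i, π i ≤ πbar)
    -- q Lipschitz
    (q : ℝ → ℝ → ℝ) (Cq : ℝ≥0)
    (hq : LipschitzWith Cq fun x : ℝ × ℝ => q x.1 x.2)
    -- the limiting noise law, with finite second moment
    (Pe : Measure ℝ) (hPe : IsProbabilityMeasure Pe)
    (hPe2 : Integrable (fun x : ℝ => x ^ 2) Pe)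
    -- the loss: strictly convex, smooth, with bounded derivatives
    (M M1 M2 M3 M12 M2v : ℝ → ℝ → ℝ)
    (hMsc : ∀ v, StrictConvexOn ℝ Set.univ fun t => M t v)
    (hM1 : ∀ u v, HasDerivAt (fun t => M t v) (M1 u v) u)
    (hM2 : ∀ u v, HasDerivAt (fun t => M1 t v) (M2 u v) u)
    (hM3 : ∀ u v, HasDerivAt (fun t => M2 t v) (M3 u v) u)
    (hM12 : ∀ u v, HasDerivAt (fun w => M1 u w) (M12 u v) v)
    (hM2v : ∀ u v, HasDerivAt (fun w => M2 u w) (M2v u v) v)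
    (hM2pos : ∀ u v, 0 < M2 u v)
    (B2 B3 B12 B2v : ℝ)
    (hM2bdd : ∀ u v, M2 u v ≤ B2)
    (hM3bdd : ∀ u v, |M3 u v| ≤ B3)
    (hM12bdd : ∀ u v, |M12 u v| ≤ B12)
    (hM2vbdd : ∀ u v, |M2v u v| ≤ B2v)
    -- the family {h_i}
    (h : ℕ → ℝ → ℝ)
    (hdef : ∀ i b, h i b =
      ∫ e, (∫ z, (∫ w,
          (1 + b * π i * M2
              (prox (b * π i) (fun t => M t (q (z (Ψ i)) e))
                ((∑ k, z k * lam k) + w))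
              (q (z (Ψ i)) e))⁻¹
        ∂(gaussianReal 0 κ)) ∂(gaussianCov Γ)) ∂Pe) :
    -- uniform Lipschitz bound on [0, b̄], hence equicontinuity
    (∃ Ceq : ℝ, ∀ i, ∀ b₁ ∈ Set.Icc (0 : ℝ) bbar, ∀ b₂ ∈ Set.Icc (0 : ℝ) bbar,
      |h i b₁ - h i b₂| ≤ Ceq * |b₁ - b₂|) ∧
    (∀ εq : ℝ, 0 < εq → ∃ δq : ℝ, 0 < δq ∧
      ∀ i, ∀ b₁ ∈ Set.Icc (0 : ℝ) bbar, ∀ b₂ ∈ Set.Icc (0 : ℝ) bbar,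
        |b₁ - b₂| < δq → |h i b₁ - h i b₂| < εq) := by
  haveI : IsProbabilityMeasure (gaussianCov Γ) := by
    rw [gaussianCov_eq hΓ]
    exact Measure.isProbabilityMeasure_map (continuous_mvec _).measurable.aemeasurable
  haveI := hPe
  -- basic nonnegativity
  have hπbar0 : 0 < πbar := lt_of_lt_of_le (hπpos 0) (hπbdd 0)
  set R : ℝ := bbar * πbar with hRdef
  have hR0 : 0 ≤ R := by positivity
  have hB2 : 0 ≤ B2 := le_trans (hM2pos 0 0).le (hM2bdd 0 0)
  have hB3 : 0 ≤ B3 := le_trans (abs_nonneg _) (hM3bdd 0 0)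
  have hB12 : 0 ≤ B12 := le_trans (abs_nonneg _) (hM12bdd 0 0)
  have hB2v : 0 ≤ B2v := le_trans (abs_nonneg _) (hM2vbdd 0 0)
  set Cqr : ℝ := (Cq : ℝ) with hCqrdef
  have hCqr : 0 ≤ Cqr := Cq.coe_nonneg
  set A0 : ℝ := |M1 0 0| with hA0def
  set q00 : ℝ := |q 0 0| with hq00def
  set K0 : ℝ := πbar * (B2 + R * B3 * A0) with hK0def
  set K1 : ℝ := πbar * (R * B3 * B2) with hK1def
  set K2 : ℝ := πbar * (R * B3 * B12) with hK2def
  have hK0n : 0 ≤ K0 := by positivity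
  have hK1n : 0 ≤ K1 := by positivity
  have hK2n : 0 ≤ K2 := by positivity
  set Cx : ℝ := R * B3 with hCxdef
  set Cy : ℝ := R * B3 * (R * B12) + R * B2v with hCydef
  have hCxn : 0 ≤ Cx := by positivity
  have hCyn : 0 ≤ Cy := by positivity
  -- q Lipschitz and growth
  have hqlip : ∀ a e a' e' : ℝ, |q a e - q a' e'| ≤ Cqr * (|a - a'| + |e - e'|) := by
    intro a e a' e'
    have h1 := hq.dist_le_mul (a, e) (a', e')
    rw [Real.dist_eq] at h1
    refine h1.trans ?_
    rw [Prod.dist_eq]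
    refine mul_le_mul_of_nonneg_left ?_ hCqr
    simp only [Real.dist_eq]
    exact max_le (le_add_of_nonneg_right (abs_nonneg _)) (le_add_of_nonneg_left (abs_nonneg _))
  have hqgrow : ∀ a e : ℝ, |q a e| ≤ q00 + Cqr * (|a| + |e|) := by
    intro a e
    have h1 := hqlip a e 0 0
    simp only [sub_zero] at h1
    calc |q a e| = |(q a e - q 0 0) + q 0 0| := by ring_nf
      _ ≤ |q a e - q 0 0| + |q 0 0| := abs_add_le _ _
      _ ≤ Cqr * (|a| + |e|) + q00 := by rw [hq00def]; exact add_le_add_left h1 _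
      _ = q00 + Cqr * (|a| + |e|) := by ring
  -- moments
  set mκ : ℝ := ∫ w, |w| ∂(gaussianReal 0 κ) with hmκdef
  have hmκ0 : 0 ≤ mκ := integral_nonneg fun w => abs_nonneg w
  set Ilam : ℝ := ∫ z, |∑ k, lam k * z k| ∂(gaussianCov Γ) with hIlamdef
  have hIlam0 : 0 ≤ Ilam := integral_nonneg fun z => abs_nonneg _
  set MZ : ℝ := ∑ j, ∫ z, |z j| ∂(gaussianCov Γ) with hMZdef
  have hMZ0 : 0 ≤ MZ := Finset.sum_nonneg fun j _ => integral_nonneg fun z => abs_nonneg _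
  have hMZj : ∀ j : Fin L, (∫ z, |z j| ∂(gaussianCov Γ)) ≤ MZ := by
    intro j
    exact Finset.single_le_sum (f := fun j => ∫ z, |z j| ∂(gaussianCov Γ))
      (fun j _ => integral_nonneg fun z => abs_nonneg _) (Finset.mem_univ j)
  set me : ℝ := ∫ e, |e| ∂Pe with hmedef
  have hme0 : 0 ≤ me := integral_nonneg fun e => abs_nonneg _
  have habse : Integrable (fun e : ℝ => |e|) Pe := by
    refine ((integrable_const (1:ℝ)).add hPe2).mono'
      continuous_abs.aestronglyMeasurable (Filter.Eventually.of_forall fun e => ?_)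
    simp only [Real.norm_eq_abs, abs_abs, Pi.add_apply]
    nlinarith [sq_abs e, sq_nonneg (|e| - 1), abs_nonneg e]
  set Ceq : ℝ := K0 + K1 * mκ + K1 * Ilam + K2 * q00 + K2 * Cqr * MZ + K2 * Cqr * me with hCeqdef
  have hq000 : 0 ≤ q00 := abs_nonneg _
  have hCeq0 : 0 ≤ Ceq := by positivity
  have key : ∀ i : ℕ, ∀ b₁ ∈ Set.Icc (0 : ℝ) bbar, ∀ b₂ ∈ Set.Icc (0 : ℝ) bbar,
      |h i b₁ - h i b₂| ≤ Ceq * |b₁ - b₂| := by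
    intro i b₁ hb₁ b₂ hb₂
    obtain ⟨hb₁0, hb₁u⟩ := hb₁
    obtain ⟨hb₂0, hb₂u⟩ := hb₂
    have hρamem : ∀ b : ℝ, 0 ≤ b → b ≤ bbar → 0 ≤ b * π i ∧ b * π i ≤ R := by
      intro b hb0 hbu
      refine ⟨mul_nonneg hb0 (hπpos i).le, ?_⟩
      rw [hRdef]
      exact mul_le_mul hbu (hπbdd i) (hπpos i).le hbbar.le
    set ρ₁ := b₁ * π i with hr1
    set ρ₂ := b₂ * π i with hr2
    obtain ⟨hρ₁0, hρ₁R⟩ := hρamem b₁ hb₁0 hb₁u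
    obtain ⟨hρ₂0, hρ₂R⟩ := hρamem b₂ hb₂0 hb₂u
    have hdρ : |ρ₁ - ρ₂| ≤ πbar * |b₁ - b₂| := by
      rw [hr1, hr2, ← sub_mul, abs_mul, abs_of_pos (hπpos i), mul_comm]
      exact mul_le_mul_of_nonneg_right (hπbdd i) (abs_nonneg _)
    set Y : (Fin L → ℝ) → ℝ → ℝ := fun z e => q (z (Ψ i)) e with hY
    set SZ : (Fin L → ℝ) → ℝ := fun z => ∑ k, z k * lam k with hSZ
    set gW : ℝ → ℝ → (Fin L → ℝ) → ℝ → ℝ :=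
      fun r e z w => Gf M M2 r (SZ z + w) (Y z e) with hgW
    set G2 : ℝ → ℝ → (Fin L → ℝ) → ℝ :=
      fun r e z => ∫ w, gW r e z w ∂(gaussianReal 0 κ) with hG2
    set G1 : ℝ → ℝ → ℝ := fun r e => ∫ z, G2 r e z ∂(gaussianCov Γ) with hG1
    have hh : ∀ b : ℝ, h i b = ∫ e, G1 (b * π i) e ∂Pe := by
      intro b
      rw [hdef i b]
      simp only [hG1, hG2, hgW, hSZ, hY, Gf]
    set Slam : ℝ := ∑ k, |lam k| with hSlam
    have hSlam0 : 0 ≤ Slam := Finset.sum_nonneg fun k _ => abs_nonneg _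
    -- pointwise bound by one
    have hGb1 : ∀ r : ℝ, 0 ≤ r → ∀ e z w, |gW r e z w| ≤ 1 := by
      intro r hr e z w
      simp only [hgW]
      exact G_le_one hM2pos hr _ _
    -- continuity in w
    have hcontw : ∀ r : ℝ, 0 ≤ r → r ≤ R → ∀ e z, Continuous fun w => gW r e z w := by
      intro r hr0 hrR e z
      refine continuous_of_lip (C := Cx) hCxn ?_
      intro a b
      have hd := G_diff_xy hM1 hM2 hM3 hM12 hM2v hM2pos hM3bdd hM12bdd hM2vbdd hr0 hrR
        (SZ z + a) (SZ z + b) (Y z e) (Y z e)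
      simp only [sub_self, abs_zero, mul_zero, add_zero, add_sub_add_left_eq_sub] at hd
      rw [hCxdef, Real.dist_eq]
      simpa only [hgW] using hd
    -- bound on G2
    have hG2b : ∀ r : ℝ, 0 ≤ r → ∀ e z, |G2 r e z| ≤ 1 := by
      intro r hr e z
      simp only [hG2]
      exact int_bound_one fun w => hGb1 r hr e z w
    -- difference of SZ
    have hSZd : ∀ z z' : Fin L → ℝ, |SZ z - SZ z'| ≤ Slam * dist z z' := by
      intro z z'
      have h1 : SZ z - SZ z' = ∑ k, (z k - z' k) * lam k := by
        simp only [hSZ]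
        rw [← Finset.sum_sub_distrib]
        exact Finset.sum_congr rfl fun k _ => by ring
      rw [h1]
      calc |∑ k, (z k - z' k) * lam k| ≤ ∑ k, |(z k - z' k) * lam k| :=
            Finset.abs_sum_le_sum_abs _ _
        _ ≤ ∑ k, |lam k| * dist z z' := by
            refine Finset.sum_le_sum fun k _ => ?_
            rw [abs_mul, mul_comm]
            refine mul_le_mul_of_nonneg_left ?_ (abs_nonneg _)
            rw [← Real.dist_eq]
            exact dist_le_pi_dist z z' k
        _ = Slam * dist z z' := by rw [hSlam, Finset.sum_mul]
    -- difference of Y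
    have hYd : ∀ (z z' : Fin L → ℝ) (e e' : ℝ),
        |Y z e - Y z' e'| ≤ Cqr * (dist z z' + |e - e'|) := by
      intro z z' e e'
      have h1 := hqlip (z (Ψ i)) e (z' (Ψ i)) e'
      refine h1.trans (mul_le_mul_of_nonneg_left ?_ hCqr)
      have h2 : |z (Ψ i) - z' (Ψ i)| ≤ dist z z' := by
        rw [← Real.dist_eq]; exact dist_le_pi_dist z z' (Ψ i)
      linarith
    -- continuity in z
    have hcontz : ∀ r : ℝ, 0 ≤ r → r ≤ R → ∀ e, Continuous fun z => G2 r e z := by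
      intro r hr0 hrR e
      refine continuous_of_lip (C := Cx * Slam + Cy * Cqr)
        (add_nonneg (mul_nonneg hCxn hSlam0) (mul_nonneg hCyn hCqr)) ?_
      intro z z'
      simp only [hG2]
      refine int_diff_le_const (hcontw r hr0 hrR e z).aestronglyMeasurable
        (hcontw r hr0 hrR e z').aestronglyMeasurable
        (fun w => hGb1 r hr0 e z w) (fun w => hGb1 r hr0 e z' w) ?_
      intro w
      have hd := G_diff_xy hM1 hM2 hM3 hM12 hM2v hM2pos hM3bdd hM12bdd hM2vbdd hr0 hrR
        (SZ z + w) (SZ z' + w) (Y z e) (Y z' e)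
      have hx : |(SZ z + w) - (SZ z' + w)| ≤ Slam * dist z z' := by
        have := hSZd z z'
        simpa using this
      have hy : |Y z e - Y z' e| ≤ Cqr * dist z z' := by
        have := hYd z z' e e
        simpa using this
      calc |gW r e z w - gW r e z' w|
          ≤ R * B3 * |(SZ z + w) - (SZ z' + w)| +
            (R * B3 * (R * B12) + R * B2v) * |Y z e - Y z' e| := by
            simpa only [hgW] using hd
        _ ≤ R * B3 * (Slam * dist z z') + (R * B3 * (R * B12) + R * B2v) * (Cqr * dist z z') := by
            refine add_le_add ?_ ?_
            · exact mul_le_mul_of_nonneg_left hx (mul_nonneg hR0 hB3)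
            · exact mul_le_mul_of_nonneg_left hy (add_nonneg
                (mul_nonneg (mul_nonneg hR0 hB3) (mul_nonneg hR0 hB12))
                (mul_nonneg hR0 hB2v))
        _ = (Cx * Slam + Cy * Cqr) * dist z z' := by
            rw [hCxdef, hCydef]; ring
    -- bound on G1
    have hG1b : ∀ r : ℝ, 0 ≤ r → ∀ e, |G1 r e| ≤ 1 := by
      intro r hr e
      simp only [hG1]
      exact int_bound_one fun z => hG2b r hr e z
    -- continuity in e
    have hconte : ∀ r : ℝ, 0 ≤ r → r ≤ R → Continuous fun e => G1 r e := by
      intro r hr0 hrR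
      refine continuous_of_lip (C := Cy * Cqr) (mul_nonneg hCyn hCqr) ?_
      intro e e'
      simp only [hG1]
      refine int_diff_le_const (hcontz r hr0 hrR e).aestronglyMeasurable
        (hcontz r hr0 hrR e').aestronglyMeasurable
        (fun z => hG2b r hr0 e z) (fun z => hG2b r hr0 e' z) ?_
      intro z
      simp only [hG2]
      refine int_diff_le_const (hcontw r hr0 hrR e z).aestronglyMeasurable
        (hcontw r hr0 hrR e' z).aestronglyMeasurable
        (fun w => hGb1 r hr0 e z w) (fun w => hGb1 r hr0 e' z w) ?_
      intro w
      have hd := G_diff_xy hM1 hM2 hM3 hM12 hM2v hM2pos hM3bdd hM12bdd hM2vbdd hr0 hrR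
        (SZ z + w) (SZ z + w) (Y z e) (Y z e')
      have hy : |Y z e - Y z e'| ≤ Cqr * |e - e'| := by
        have := hYd z z e e'
        simpa using this
      calc |gW r e z w - gW r e' z w|
          ≤ R * B3 * |(SZ z + w) - (SZ z + w)| +
            (R * B3 * (R * B12) + R * B2v) * |Y z e - Y z e'| := by
            simpa only [hgW] using hd
        _ ≤ 0 + (R * B3 * (R * B12) + R * B2v) * (Cqr * |e - e'|) := by
            refine add_le_add (by simp) (mul_le_mul_of_nonneg_left hy (add_nonneg
              (mul_nonneg (mul_nonneg hR0 hB3) (mul_nonneg hR0 hB12))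
              (mul_nonneg hR0 hB2v)))
        _ = (Cy * Cqr) * dist e e' := by
            rw [hCydef, Real.dist_eq]; ring
    -- step 1 : level w
    have step1 : ∀ (e : ℝ) (z : Fin L → ℝ),
        |G2 ρ₁ e z - G2 ρ₂ e z| ≤
          |b₁ - b₂| * (K0 + K1 * |SZ z| + K2 * |Y z e|) + |b₁ - b₂| * K1 * mκ := by
      intro e z
      have hptw : ∀ w : ℝ, |gW ρ₁ e z w - gW ρ₂ e z w| ≤
          |b₁ - b₂| * (K0 + K1 * |SZ z| + K2 * |Y z e|) + (|b₁ - b₂| * K1) * |w| := by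
        intro w
        have hd := G_diff_rho hM1 hM2 hM3 hM12 hM2pos hM2bdd hM3bdd hM12bdd
          hρ₁0 hρ₂0 hρ₂R (SZ z + w) (Y z e)
        have hM1g := M1_growth hM2 hM12 hM2bdd hM2pos hM12bdd (SZ z + w) (Y z e)
        have hxb : |SZ z + w| ≤ |SZ z| + |w| := abs_add_le _ _
        have hM1tot : |M1 (SZ z + w) (Y z e)| ≤
            A0 + B2 * (|SZ z| + |w|) + B12 * |Y z e| := by
          refine hM1g.trans ?_
          have h2 := mul_le_mul_of_nonneg_left hxb hB2
          rw [hA0def]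
          linarith
        calc |gW ρ₁ e z w - gW ρ₂ e z w|
            ≤ (B2 + R * B3 * |M1 (SZ z + w) (Y z e)|) * |ρ₁ - ρ₂| := by
              simpa only [hgW] using hd
          _ ≤ (B2 + R * B3 * (A0 + B2 * (|SZ z| + |w|) + B12 * |Y z e|)) *
                (πbar * |b₁ - b₂|) := by
              refine mul_le_mul ?_ hdρ (abs_nonneg _) ?_
              · have h3 := mul_le_mul_of_nonneg_left hM1tot (mul_nonneg hR0 hB3)
                linarith
              · have hA0n : 0 ≤ A0 := abs_nonneg _
                exact add_nonneg hB2 (mul_nonneg (mul_nonneg hR0 hB3)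
                  (add_nonneg (add_nonneg hA0n (mul_nonneg hB2
                    (add_nonneg (abs_nonneg _) (abs_nonneg _))))
                    (mul_nonneg hB12 (abs_nonneg _))))
          _ = |b₁ - b₂| * (K0 + K1 * |SZ z| + K2 * |Y z e|) + (|b₁ - b₂| * K1) * |w| := by
              rw [hK0def, hK1def, hK2def]; ring
      have hint : Integrable
          (fun w : ℝ => |b₁ - b₂| * (K0 + K1 * |SZ z| + K2 * |Y z e|)
            + (|b₁ - b₂| * K1) * |w|) (gaussianReal 0 κ) :=
        (integrable_const _).add ((integrable_abs_gaussianReal κ).const_mul _)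
      have hstep := int_diff_le (μ := gaussianReal 0 κ)
        (hcontw ρ₁ hρ₁0 hρ₁R e z).aestronglyMeasurable
        (hcontw ρ₂ hρ₂0 hρ₂R e z).aestronglyMeasurable
        (fun w => hGb1 ρ₁ hρ₁0 e z w) (fun w => hGb1 ρ₂ hρ₂0 e z w)
        hint hptw
      refine hstep.trans (le_of_eq ?_)
      have hint2 : Integrable (fun w : ℝ => (|b₁ - b₂| * K1) * |w|) (gaussianReal 0 κ) :=
        (integrable_abs_gaussianReal κ).const_mul _
      have hint1 : Integrable (fun _ : ℝ =>
          |b₁ - b₂| * (K0 + K1 * |SZ z| + K2 * |Y z e|)) (gaussianReal 0 κ) :=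
        integrable_const _
      simp only [integral_add hint1 hint2, integral_const, integral_const_mul,
        measure_univ, ENNReal.toReal_one, probReal_univ, smul_eq_mul, one_mul]
      try rw [hmκdef]
      try ring
    -- step 2 : level z
    have step2 : ∀ e : ℝ, |G1 ρ₁ e - G1 ρ₂ e| ≤
        |b₁ - b₂| * (K0 + K1 * mκ + K1 * Ilam + K2 * q00 + K2 * Cqr * MZ)
          + (|b₁ - b₂| * (K2 * Cqr)) * |e| := by
      intro e
      have hptz : ∀ z : Fin L → ℝ, |G2 ρ₁ e z - G2 ρ₂ e z| ≤
          |b₁ - b₂| * (K0 + K1 * mκ + K2 * q00 + K2 * Cqr * |e|)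
          + (|b₁ - b₂| * K1) * |∑ k, lam k * z k|
          + (|b₁ - b₂| * (K2 * Cqr)) * |z (Ψ i)| := by
        intro z
        refine (step1 e z).trans ?_
        have hy : |Y z e| ≤ q00 + Cqr * (|z (Ψ i)| + |e|) := by
          simpa only [hY] using hqgrow (z (Ψ i)) e
        have hszeq : |SZ z| = |∑ k, lam k * z k| := by
          simp only [hSZ]
          congr 1
          exact Finset.sum_congr rfl fun k _ => mul_comm _ _
        calc |b₁ - b₂| * (K0 + K1 * |SZ z| + K2 * |Y z e|) + |b₁ - b₂| * K1 * mκ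
            ≤ |b₁ - b₂| * (K0 + K1 * |SZ z| + K2 * (q00 + Cqr * (|z (Ψ i)| + |e|)))
              + |b₁ - b₂| * K1 * mκ := by
              refine add_le_add_left (mul_le_mul_of_nonneg_left ?_ (abs_nonneg _)) _
              exact add_le_add_right (mul_le_mul_of_nonneg_left hy hK2n) _
          _ = |b₁ - b₂| * (K0 + K1 * mκ + K2 * q00 + K2 * Cqr * |e|)
              + (|b₁ - b₂| * K1) * |∑ k, lam k * z k|
              + (|b₁ - b₂| * (K2 * Cqr)) * |z (Ψ i)| := by
              rw [hszeq]; ring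
      have hint : Integrable (fun z : Fin L → ℝ =>
          |b₁ - b₂| * (K0 + K1 * mκ + K2 * q00 + K2 * Cqr * |e|)
          + (|b₁ - b₂| * K1) * |∑ k, lam k * z k|
          + (|b₁ - b₂| * (K2 * Cqr)) * |z (Ψ i)|) (gaussianCov Γ) :=
        ((integrable_const _).add
          ((integrable_abs_lin_gaussianCov hΓ lam).const_mul _)).add
          ((integrable_abs_eval_gaussianCov hΓ (Ψ i)).const_mul _)
      have hstep := int_diff_le (μ := gaussianCov Γ)
        (hcontz ρ₁ hρ₁0 hρ₁R e).aestronglyMeasurable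
        (hcontz ρ₂ hρ₂0 hρ₂R e).aestronglyMeasurable
        (fun z => hG2b ρ₁ hρ₁0 e z) (fun z => hG2b ρ₂ hρ₂0 e z)
        hint hptz
      refine hstep.trans ?_
      have hint2 : Integrable
          (fun z : Fin L → ℝ => (|b₁ - b₂| * K1) * |∑ k, lam k * z k|) (gaussianCov Γ) :=
        (integrable_abs_lin_gaussianCov hΓ lam).const_mul _
      have hint3 : Integrable
          (fun z : Fin L → ℝ => (|b₁ - b₂| * (K2 * Cqr)) * |z (Ψ i)|) (gaussianCov Γ) :=
        (integrable_abs_eval_gaussianCov hΓ (Ψ i)).const_mul _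
      have hint1 : Integrable (fun _ : Fin L → ℝ =>
          |b₁ - b₂| * (K0 + K1 * mκ + K2 * q00 + K2 * Cqr * |e|)) (gaussianCov Γ) :=
        integrable_const _
      have hint12 : Integrable (fun z : Fin L → ℝ =>
          |b₁ - b₂| * (K0 + K1 * mκ + K2 * q00 + K2 * Cqr * |e|)
          + (|b₁ - b₂| * K1) * |∑ k, lam k * z k|) (gaussianCov Γ) := hint1.add hint2
      simp only [integral_add hint12 hint3, integral_add hint1 hint2,
        integral_const, integral_const_mul, measure_univ, ENNReal.toReal_one, probReal_univ,
        smul_eq_mul, one_mul]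
      have hMZi := hMZj (Ψ i)
      have hIl : (∫ z, |∑ k, lam k * z k| ∂(gaussianCov Γ)) = Ilam := by
        rw [hIlamdef]
      rw [hIl]
      have h4 : (|b₁ - b₂| * (K2 * Cqr)) * (∫ z, |z (Ψ i)| ∂(gaussianCov Γ))
          ≤ (|b₁ - b₂| * (K2 * Cqr)) * MZ := by
        refine mul_le_mul_of_nonneg_left hMZi (mul_nonneg (abs_nonneg _) (mul_nonneg hK2n hCqr))
      linarith [h4]
    -- step 3 : level e
    rw [hh b₁, hh b₂, ← hr1, ← hr2]
    have hint : Integrable (fun e : ℝ =>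
        |b₁ - b₂| * (K0 + K1 * mκ + K1 * Ilam + K2 * q00 + K2 * Cqr * MZ)
        + (|b₁ - b₂| * (K2 * Cqr)) * |e|) Pe :=
      (integrable_const _).add (habse.const_mul _)
    have hstep := int_diff_le (μ := Pe)
      (hconte ρ₁ hρ₁0 hρ₁R).aestronglyMeasurable
      (hconte ρ₂ hρ₂0 hρ₂R).aestronglyMeasurable
      (fun e => hG1b ρ₁ hρ₁0 e) (fun e => hG1b ρ₂ hρ₂0 e)
      hint step2
    refine hstep.trans (le_of_eq ?_)
    have hint2 : Integrable (fun e : ℝ => (|b₁ - b₂| * (K2 * Cqr)) * |e|) Pe :=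
      habse.const_mul _
    have hint1 : Integrable (fun _ : ℝ =>
        |b₁ - b₂| * (K0 + K1 * mκ + K1 * Ilam + K2 * q00 + K2 * Cqr * MZ)) Pe :=
      integrable_const _
    simp only [integral_add hint1 hint2, integral_const, integral_const_mul,
      measure_univ, ENNReal.toReal_one, probReal_univ, smul_eq_mul, one_mul]
    try rw [hmedef]
    try rw [hCeqdef]
    try ring
  constructor
  · exact ⟨Ceq, key⟩
  · intro εq hεq
    refine ⟨εq / (Ceq + 1), div_pos hεq (by linarith), ?_⟩
    intro i b₁ hb₁ b₂ hb₂ hlt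
    calc |h i b₁ - h i b₂| ≤ Ceq * |b₁ - b₂| := key i b₁ hb₁ b₂ hb₂
      _ ≤ (Ceq + 1) * |b₁ - b₂| :=
          mul_le_mul_of_nonneg_right (by linarith) (abs_nonneg _)
      _ < (Ceq + 1) * (εq / (Ceq + 1)) := by
          exact mul_lt_mul_of_pos_left hlt (by linarith)
      _ = εq := by
          rw [mul_comm, div_mul_cancel₀ _ (ne_of_gt (by linarith : (0:ℝ) < Ceq + 1))]

end
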